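/- For every non-vertex point p of the weighted projective plane P(1,1,2), the set of forms f ∈ W such that the coefficient of z³ in f vanishes (i.e. the curve f = 0 passes through the vertex) and f is singular at p is a complex linear subspace of W of dimension 12 (codimension 4). -/

import Mathlib

open MvPolynomial

noncomputable section

/-- The polynomial ring `ℂ[x, y, z]`, with variables indexed by `Fin 3`:
`x = X 0`, `y = X 1`, `z = X 2`. -/
abbrev P3 : Type := MvPolynomial (Fin 3) ℂ

/-- The weights `wt(x) = wt(y) = 1`, `wt(z) = 2`. -/
def w112 : Fin 3 → ℕ := ![1, 1, 2]

/-- The space `W` of weighted homogeneous polynomials of weighted degree `6`. -/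
def W6 : Submodule ℂ P3 := weightedHomogeneousSubmodule ℂ w112 6

/-- A form `f` is singular at the point of the cone `P(1,1,2)` with representative `p ∈ ℂ³`
if the three partial derivatives of `f` all vanish at `p`. -/
def SingAt (f : P3) (p : Fin 3 → ℂ) : Prop :=
  ∀ i : Fin 3, eval p (pderiv i f) = 0

/-! ### Auxiliary material -/

/-- The exponent finsupp with exponents `t.1, t.2.1, t.2.2` on `x, y, z`. -/
def e3 (t : ℕ × ℕ × ℕ) : Fin 3 →₀ ℕ :=
  Finsupp.single 0 t.1 + Finsupp.single 1 t.2.1 + Finsupp.single 2 t.2.2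

lemma e3_app0 (t : ℕ × ℕ × ℕ) : e3 t 0 = t.1 := by simp [e3, Finsupp.single_apply]
lemma e3_app1 (t : ℕ × ℕ × ℕ) : e3 t 1 = t.2.1 := by simp [e3, Finsupp.single_apply]
lemma e3_app2 (t : ℕ × ℕ × ℕ) : e3 t 2 = t.2.2 := by simp [e3, Finsupp.single_apply]

lemma e3_inj : Function.Injective e3 := by
  intro s t h
  have h0 := congrArg (fun d => d 0) h
  have h1 := congrArg (fun d => d 1) h
  have h2 := congrArg (fun d => d 2) h
  simp only [e3_app0, e3_app1, e3_app2] at h0 h1 h2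
  exact Prod.ext h0 (Prod.ext h1 h2)

lemma weight3 (d : Fin 3 →₀ ℕ) : Finsupp.weight w112 d = d 0 + d 1 + 2 * d 2 := by
  rw [Finsupp.weight_apply, Finsupp.sum_fintype]
  · simp [w112, Fin.sum_univ_three]; ring
  · intro i; simp

lemma e3_eq_self (d : Fin 3 →₀ ℕ) : e3 (d 0, d 1, d 2) = d := by
  ext i; fin_cases i <;> simp [e3, Finsupp.single_apply]

/-- The set of exponent vectors of weighted degree `6`. -/
def expSet : Set (Fin 3 →₀ ℕ) := {d : Fin 3 →₀ ℕ | Finsupp.weight w112 d = 6}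

/-- An explicit finset enumerating `expSet`. -/
def T : Finset (Fin 3 →₀ ℕ) :=
  (((Finset.range 7) ×ˢ (Finset.range 7) ×ˢ (Finset.range 4)).filter
    (fun t => t.1 + t.2.1 + 2 * t.2.2 = 6)).image e3

lemma cardT : T.card = 16 := by
  rw [T, Finset.card_image_of_injective _ e3_inj]
  decide

lemma memT (d : Fin 3 →₀ ℕ) : d ∈ T ↔ d ∈ expSet := by
  simp only [T, Finset.mem_image, Finset.mem_filter, Finset.mem_product, Finset.mem_range,
    expSet, Set.mem_setOf_eq]
  constructor
  · rintro ⟨t, ⟨_, ht⟩, rfl⟩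
    rw [weight3, e3_app0, e3_app1, e3_app2]; omega
  · intro hd
    refine ⟨(d 0, d 1, d 2), ⟨?_, ?_⟩, e3_eq_self d⟩ <;> dsimp only <;>
      rw [weight3] at hd <;> omega

lemma W6_eq : W6 = MvPolynomial.restrictSupport ℂ expSet :=
  weightedHomogeneousSubmodule_eq_finsupp_supported ℂ w112 6

instance : Fintype expSet := Fintype.ofFinset T memT

instance : FiniteDimensional ℂ W6 := by
  rw [W6_eq]; exact Module.Finite.of_basis (basisRestrictSupport ℂ expSet)

lemma finrank_W6 : Module.finrank ℂ W6 = 16 := by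
  rw [W6_eq, Module.finrank_eq_card_basis (basisRestrictSupport ℂ expSet),
    Fintype.card_of_subtype T memT, cardT]

lemma mono_mem (t : ℕ × ℕ × ℕ) (h : t.1 + t.2.1 + 2 * t.2.2 = 6) (r : ℂ) :
    (monomial (e3 t) r : P3) ∈ W6 := by
  rw [W6, mem_weightedHomogeneousSubmodule]
  apply isWeightedHomogeneous_monomial
  rw [weight3, e3_app0, e3_app1, e3_app2]; exact h

/-! ### Evaluation of partial derivatives of monomials -/

lemma eval_monomial3 (q : Fin 3 → ℂ) (t : ℕ × ℕ × ℕ) (r : ℂ) :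
    eval q (monomial (e3 t) r) = r * q 0 ^ t.1 * q 1 ^ t.2.1 * q 2 ^ t.2.2 := by
  rw [eval_monomial, Finsupp.prod_fintype]
  · rw [Fin.prod_univ_three, e3_app0, e3_app1, e3_app2]; ring
  · intro i; exact pow_zero _

lemma e3_sub0 (a b c : ℕ) : e3 (a, b, c) - Finsupp.single 0 1 = e3 (a - 1, b, c) := by
  ext i; fin_cases i <;> simp [e3, Finsupp.single_apply]
lemma e3_sub1 (a b c : ℕ) : e3 (a, b, c) - Finsupp.single 1 1 = e3 (a, b - 1, c) := by
  ext i; fin_cases i <;> simp [e3, Finsupp.single_apply]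
lemma e3_sub2 (a b c : ℕ) : e3 (a, b, c) - Finsupp.single 2 1 = e3 (a, b, c - 1) := by
  ext i; fin_cases i <;> simp [e3, Finsupp.single_apply]

lemma epd0 (q : Fin 3 → ℂ) (a b c : ℕ) (r : ℂ) :
    eval q (pderiv 0 (monomial (e3 (a, b, c)) r)) = r * a * q 0 ^ (a - 1) * q 1 ^ b * q 2 ^ c := by
  rw [pderiv_monomial, e3_sub0, e3_app0, eval_monomial3]
lemma epd1 (q : Fin 3 → ℂ) (a b c : ℕ) (r : ℂ) :
    eval q (pderiv 1 (monomial (e3 (a, b, c)) r)) = r * b * q 0 ^ a * q 1 ^ (b - 1) * q 2 ^ c := by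
  rw [pderiv_monomial, e3_sub1, e3_app1, eval_monomial3]
lemma epd2 (q : Fin 3 → ℂ) (a b c : ℕ) (r : ℂ) :
    eval q (pderiv 2 (monomial (e3 (a, b, c)) r)) = r * c * q 0 ^ a * q 1 ^ b * q 2 ^ (c - 1) := by
  rw [pderiv_monomial, e3_sub2, e3_app2, eval_monomial3]

lemma coeff3 (t t' : ℕ × ℕ × ℕ) (r : ℂ) :
    coeff (e3 t') (monomial (e3 t) r) = if t = t' then r else 0 := by
  rw [coeff_monomial]
  simp [e3_inj.eq_iff]

lemma single23 : (Finsupp.single 2 3 : Fin 3 →₀ ℕ) = e3 (0, 0, 3) := by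
  ext i; fin_cases i <;> simp [e3, Finsupp.single_apply]

/-! ### The key surjectivity lemma -/

set_option maxHeartbeats 1000000 in
lemma key (q : Fin 3 → ℂ) (hq : ¬(q 0 = 0 ∧ q 1 = 0)) (t : Fin 4 → ℂ) :
    ∃ f : P3, f ∈ W6 ∧ coeff (Finsupp.single 2 3) f = t 0 ∧
      eval q (pderiv 0 f) = t 1 ∧ eval q (pderiv 1 f) = t 2 ∧ eval q (pderiv 2 f) = t 3 := by
  by_cases h0 : q 0 = 0
  · -- then q 1 ≠ 0, use y-based monomials
    have h1 : q 1 ≠ 0 := fun h => hq ⟨h0, h⟩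
    set a : ℂ := t 0 with ha
    set d : ℂ := (t 3 - 3 * q 2 ^ 2 * t 0) / q 1 ^ 4 with hd
    set c : ℂ := t 1 / q 1 ^ 5 with hc
    set b : ℂ := (t 2 - 5 * q 1 ^ 4 * q 0 * c - 4 * q 1 ^ 3 * q 2 * d) / (6 * q 1 ^ 5) with hb
    refine ⟨monomial (e3 (0, 0, 3)) a + monomial (e3 (0, 6, 0)) b +
      monomial (e3 (1, 5, 0)) c + monomial (e3 (0, 4, 1)) d, ?_, ?_, ?_, ?_, ?_⟩
    · exact Submodule.add_mem _ (Submodule.add_mem _ (Submodule.add_mem _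
        (mono_mem (0, 0, 3) rfl _) (mono_mem (0, 6, 0) rfl _)) (mono_mem (1, 5, 0) rfl _))
        (mono_mem (0, 4, 1) rfl _)
    · simp only [single23, coeff_add, coeff3, ha]; norm_num
    · simp only [map_add, epd0]
      rw [hc]; push_cast; field_simp [h1]; ring
    · simp only [map_add, epd1]
      rw [hb]; push_cast; field_simp [h1]; ring
    · simp only [map_add, epd2]
      rw [hd, ha]; push_cast; field_simp [h1]; ring
  · -- q 0 ≠ 0, use x-based monomials
    set a : ℂ := t 0 with ha
    set d : ℂ := (t 3 - 3 * q 2 ^ 2 * t 0) / q 0 ^ 4 with hd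
    set c : ℂ := t 2 / q 0 ^ 5 with hc
    set b : ℂ := (t 1 - 5 * q 0 ^ 4 * q 1 * c - 4 * q 0 ^ 3 * q 2 * d) / (6 * q 0 ^ 5) with hb
    refine ⟨monomial (e3 (0, 0, 3)) a + monomial (e3 (6, 0, 0)) b +
      monomial (e3 (5, 1, 0)) c + monomial (e3 (4, 0, 1)) d, ?_, ?_, ?_, ?_, ?_⟩
    · exact Submodule.add_mem _ (Submodule.add_mem _ (Submodule.add_mem _
        (mono_mem (0, 0, 3) rfl _) (mono_mem (6, 0, 0) rfl _)) (mono_mem (5, 1, 0) rfl _))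
        (mono_mem (4, 0, 1) rfl _)
    · simp only [single23, coeff_add, coeff3, ha]; norm_num
    · simp only [map_add, epd0]
      rw [hb]; push_cast; field_simp [h0]; ring
    · simp only [map_add, epd1]
      rw [hc]; push_cast; field_simp [h0]; ring
    · simp only [map_add, epd2]
      rw [hd, ha]; push_cast; field_simp [h0]; ring

/-- The `i`-th partial derivative evaluated at `p`, as a linear functional. -/
def Dv (p : Fin 3 → ℂ) (i : Fin 3) : P3 →ₗ[ℂ] ℂ where
  toFun f := eval p (pderiv i f)
  map_add' f g := by simp
  map_smul' r f := by simp [smul_eval]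

/-- The four linear conditions. -/
def Lp (p : Fin 3 → ℂ) : Fin 4 → (P3 →ₗ[ℂ] ℂ) :=
  ![lcoeff ℂ (Finsupp.single 2 3), Dv p 0, Dv p 1, Dv p 2]

set_option maxHeartbeats 1000000 in
set_option synthInstance.maxHeartbeats 400000 in
/-- For every non-vertex point `p` of `P(1,1,2)`, the set of forms `f ∈ W` whose coefficient of
`z³` vanishes (i.e. the curve `f = 0` passes through the vertex) and which are singular at `p`
is a complex linear subspace of `W` of dimension `12` (codimension 4). -/
theorem cone_through_vertex_and_singular_at_point_codim_four
    (p : Fin 3 → ℂ) (hp : ¬(p 0 = 0 ∧ p 1 = 0)) :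
    ∃ S : Submodule ℂ P3,
      (S : Set P3) = {f : P3 | f ∈ W6 ∧ coeff (Finsupp.single 2 3) f = 0 ∧ SingAt f p} ∧
      Module.finrank ℂ S = 12 := by
  classical
  set Φ : P3 →ₗ[ℂ] (Fin 4 → ℂ) := LinearMap.pi (Lp p) with hΦ
  refine ⟨W6 ⊓ LinearMap.ker Φ, ?_, ?_⟩
  · ext f
    simp only [SetLike.mem_coe, Submodule.mem_inf, LinearMap.mem_ker, Set.mem_setOf_eq]
    have hiff : Φ f = 0 ↔ (coeff (Finsupp.single 2 3) f = 0 ∧ SingAt f p) := by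
      constructor
      · intro h
        refine ⟨congrFun h 0, fun i => ?_⟩
        fin_cases i
        · exact congrFun h 1
        · exact congrFun h 2
        · exact congrFun h 3
      · rintro ⟨h0, hs⟩
        funext j
        fin_cases j
        · exact h0
        · exact hs 0
        · exact hs 1
        · exact hs 2
    rw [hiff]
  · have hsurj : Function.Surjective (Φ.domRestrict W6) := by
      intro t
      obtain ⟨f, hfW, h0, h1, h2, h3⟩ := key p hp t
      refine ⟨⟨f, hfW⟩, ?_⟩
      funext j
      fin_cases j
      · exact h0
      · exact h1
      · exact h2
      · exact h3
    have hrange : LinearMap.range (Φ.domRestrict W6) = ⊤ := LinearMap.range_eq_top.mpr hsurj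
    have hrn := LinearMap.finrank_range_add_finrank_ker (Φ.domRestrict W6)
    rw [hrange, finrank_top, finrank_W6] at hrn
    have h4 : Module.finrank ℂ (Fin 4 → ℂ) = 4 := by simp
    rw [h4] at hrn
    have hker : LinearMap.ker (Φ.domRestrict W6)
        = Submodule.comap W6.subtype (W6 ⊓ LinearMap.ker Φ) := by
      rw [LinearMap.ker_domRestrict, Submodule.comap_inf, Submodule.comap_subtype_self,
        top_inf_eq]
    have he : Module.finrank ℂ (Submodule.comap W6.subtype (W6 ⊓ LinearMap.ker Φ))
        = Module.finrank ℂ (W6 ⊓ LinearMap.ker Φ : Submodule ℂ P3) :=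
      LinearEquiv.finrank_eq
        (Submodule.comapSubtypeEquivOfLe (inf_le_left : W6 ⊓ LinearMap.ker Φ ≤ W6))
    rw [← hker] at he
    omega

end
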